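/- arXiv:0901.3900 — 2 statements merged into one kernel-verified Lean document; each statement's English description precedes it below -/
import Mathlib

section
/- Let τ_{m,n} be nowhere-vanishing functions of t and set w_{m,n} = τ_{m+1,n} / τ_{m,n+1}. Fix i ≠ j in I ∪ J and suppose that for all (m,n) ∈ ℤ² the w-equation holds: T_i T_j(w_{m,n}) = (T_i(w_{m,n+1}) T_j(w_{m,n+1}) / w_{m+1,n+1}) · (t_i T_j(w_{m+1,n}) − t_j T_i(w_{m+1,n})) / (t_i T_j(w_{m,n+1}) − t_j T_i(w_{m,n+1})), the denominators being nonzero. Then the quantity Q_{m,n} := (t_i T_i(τ_{m+1,n+1}) T_j(τ_{m+2,n}) − t_j T_j(τ_{m+1,n+1}) T_i(τ_{m+2,n})) / (T_i T_j(τ_{m+1,n}) τ_{m+2,n+1}) satisfies Q_{m,n} = Q_{m-1,n+1} for all (m,n) ∈ ℤ². -/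
/-- The `q`-shift operator on the point `t`: `t_i ↦ q t_i` if `i > 0` (i.e. `i ∈ I`),
`t_i ↦ q⁻¹ t_i` if `i < 0` (i.e. `i ∈ J`), other coordinates unchanged. -/
noncomputable def Tshift (q : ℂ) (i : ℤ) (t : ℤ → ℂ) : ℤ → ℂ :=
  Function.update t i ((if 0 < i then q else q⁻¹) * t i)

/-- `w_{m,n} = τ_{m+1,n} / τ_{m,n+1}`. -/
noncomputable def wOf (τ : ℤ → ℤ → (ℤ → ℂ) → ℂ) (m n : ℤ) (t : ℤ → ℂ) : ℂ :=
  τ (m + 1) n t / τ m (n + 1) t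

/-- `Q_{m,n} = (t_i T_i(τ_{m+1,n+1}) T_j(τ_{m+2,n}) − t_j T_j(τ_{m+1,n+1}) T_i(τ_{m+2,n}))
/ (T_i T_j(τ_{m+1,n}) τ_{m+2,n+1})`. -/
noncomputable def Qexpr (q : ℂ) (i j : ℤ) (τ : ℤ → ℤ → (ℤ → ℂ) → ℂ) (m n : ℤ)
    (t : ℤ → ℂ) : ℂ :=
  (t i * τ (m + 1) (n + 1) (Tshift q i t) * τ (m + 2) n (Tshift q j t)
      - t j * τ (m + 1) (n + 1) (Tshift q j t) * τ (m + 2) n (Tshift q i t))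
    / (τ (m + 1) n (Tshift q i (Tshift q j t)) * τ (m + 2) (n + 1) t)

lemma Tshift_ne (q : ℂ) (hq : q ≠ 0) (i : ℤ) (t : ℤ → ℂ) (ht : ∀ l, t l ≠ 0) :
    ∀ l, Tshift q i t l ≠ 0 := by
  intro l
  unfold Tshift
  rcases eq_or_ne l i with h | h
  · subst h
    rw [Function.update_self]
    exact mul_ne_zero (by split <;> simp [hq]) (ht l)
  · rw [Function.update_of_ne h]; exact ht l

/-- for nowhere-vanishing `τ_{m,n}`, `w_{m,n} = τ_{m+1,n}/τ_{m,n+1}`, and a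
fixed pair `i ≠ j` in `I ∪ J` such that the `w`-equation holds for all `(m,n)` (the
denominators being nonzero), the quantity `Q_{m,n}` satisfies `Q_{m,n} = Q_{m-1,n+1}`. -/
theorem w_equation_decomposition
    (q : ℂ) (hq : q ≠ 0) (I J : Finset ℤ) (hI : ∀ i ∈ I, 0 < i) (hJ : ∀ j ∈ J, j < 0)
    (τ : ℤ → ℤ → (ℤ → ℂ) → ℂ)
    (hτ : ∀ m n : ℤ, ∀ t : ℤ → ℂ, (∀ l, t l ≠ 0) → τ m n t ≠ 0)
    (i j : ℤ) (hi : i ∈ I ∪ J) (hj : j ∈ I ∪ J) (hij : i ≠ j)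
    (hden : ∀ m n : ℤ, ∀ t : ℤ → ℂ, (∀ l, t l ≠ 0) →
      t i * wOf τ m (n + 1) (Tshift q j t) - t j * wOf τ m (n + 1) (Tshift q i t) ≠ 0)
    (hweq : ∀ m n : ℤ, ∀ t : ℤ → ℂ, (∀ l, t l ≠ 0) →
      wOf τ m n (Tshift q i (Tshift q j t))
        = wOf τ m (n + 1) (Tshift q i t) * wOf τ m (n + 1) (Tshift q j t)
            / wOf τ (m + 1) (n + 1) t
          * (t i * wOf τ (m + 1) n (Tshift q j t) - t j * wOf τ (m + 1) n (Tshift q i t))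
          / (t i * wOf τ m (n + 1) (Tshift q j t) - t j * wOf τ m (n + 1) (Tshift q i t))) :
    ∀ m n : ℤ, ∀ t : ℤ → ℂ, (∀ l, t l ≠ 0) →
      Qexpr q i j τ m n t = Qexpr q i j τ (m - 1) (n + 1) t := by
  intro m n t ht
  have hti := Tshift_ne q hq i t ht
  have htj := Tshift_ne q hq j t ht
  have htij := Tshift_ne q hq i _ htj
  have hA1 : τ (m + 1) n (Tshift q i (Tshift q j t)) ≠ 0 := hτ _ _ _ htij
  have hA2 : τ m (n + 1) (Tshift q i (Tshift q j t)) ≠ 0 := hτ _ _ _ htij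
  have hB1 : τ (m + 1) (n + 1) (Tshift q i t) ≠ 0 := hτ _ _ _ hti
  have hB2 : τ m (n + 1 + 1) (Tshift q i t) ≠ 0 := hτ _ _ _ hti
  have hC1 : τ (m + 1) (n + 1) (Tshift q j t) ≠ 0 := hτ _ _ _ htj
  have hC2 : τ m (n + 1 + 1) (Tshift q j t) ≠ 0 := hτ _ _ _ htj
  have hD1 : τ (m + 1 + 1) (n + 1) t ≠ 0 := hτ _ _ _ ht
  have hD2 : τ (m + 1) (n + 1 + 1) t ≠ 0 := hτ _ _ _ ht
  have hw := hweq m n t ht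
  have hd := hden m n t ht
  simp only [wOf] at hw hd
  have hd' : t i * τ (m + 1) (n + 1) (Tshift q j t) * τ m (n + 1 + 1) (Tshift q i t)
      - t j * τ (m + 1) (n + 1) (Tshift q i t) * τ m (n + 1 + 1) (Tshift q j t) ≠ 0 := by
    intro h
    apply hd
    field_simp
    linear_combination h
  simp only [Qexpr, show m - 1 + 1 = m from by ring, show m - 1 + 2 = m + 1 from by ring,
    show m + 2 = m + 1 + 1 from by ring]
  rw [div_eq_div_iff (mul_ne_zero hA1 hD1) (mul_ne_zero hA2 hD2)]
  set A1 := τ (m + 1) n (Tshift q i (Tshift q j t)) with hsA1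
  set A2 := τ m (n + 1) (Tshift q i (Tshift q j t)) with hsA2
  set B1 := τ (m + 1) (n + 1) (Tshift q i t) with hsB1
  set B2 := τ m (n + 1 + 1) (Tshift q i t) with hsB2
  set C1 := τ (m + 1) (n + 1) (Tshift q j t) with hsC1
  set C2 := τ m (n + 1 + 1) (Tshift q j t) with hsC2
  set D1 := τ (m + 1 + 1) (n + 1) t with hsD1
  set D2 := τ (m + 1) (n + 1 + 1) t with hsD2
  set E1 := τ (m + 1 + 1) n (Tshift q j t) with hsE1
  set F1 := τ (m + 1 + 1) n (Tshift q i t) with hsF1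
  have e1 : t i * (C1 / C2) - t j * (B1 / B2)
      = (t i * C1 * B2 - t j * B1 * C2) / (C2 * B2) := by
    field_simp
  have e2 : t i * (E1 / C1) - t j * (F1 / B1)
      = (t i * E1 * B1 - t j * F1 * C1) / (C1 * B1) := by
    field_simp
  rw [e1, e2] at hw
  field_simp [hB1, hB2, hC1, hC2, hD1, hD2, hA1, hA2] at hw
  rw [eq_div_iff (by intro h; apply hd'; linear_combination h)] at hw
  have hw2 : A1 * D1 * (t i * C1 * B2 - t j * B1 * C2)
      = A2 * D2 * (t i * E1 * B1 - t j * F1 * C1) := by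
    apply mul_left_cancel₀ (mul_ne_zero (mul_ne_zero (mul_ne_zero hB1 hC1) hC2) hB2)
    linear_combination (B1 * C1 * C2 * B2) * hw
  linear_combination -hw2
end

section
/- Let I = {1,2}, J = {-1,-2}, so t = (t_1, t_2, t_{-1}, t_{-2}) with all coordinates nonzero, and fix q ∈ ℂ*. Let w_{m,n} be nowhere-vanishing functions of t satisfying, for all i ≠ j in {1,2,-1,-2} and all (m,n) ∈ ℤ², the w-equation T_i T_j(w_{m,n}) = (T_i(w_{m,n+1}) T_j(w_{m,n+1}) / w_{m+1,n+1}) · (t_i T_j(w_{m+1,n}) − t_j T_i(w_{m+1,n})) / (t_i T_j(w_{m,n+1}) − t_j T_i(w_{m,n+1})) (denominators assumed nonzero), together with the homogeneity relation T_1 T_2(w_{m,n}) = c_{m,n} T_{-1} T_{-2}(w_{m,n}) for nonzero constants c_{m,n}. Define f_{m,n} = T_1(w_{m,n})/T_{-1}(w_{m,n}) and g_{m,n} = T_1 T_{-1}(w_{m,n}) / T_{-1} T_{-2}(w_{m,n}). Then, wherever the denominators are nonzero, T_1 T_2(f_{m,n}) / f_{m+1,n+1} = (c_{m,n}/c_{m,n+1})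 · (g_{m+1,n} − t_1/t_{-2})(g_{m,n+1} − c_{m,n+1} t_{-1}/t_2) / ((g_{m,n+1} − t_1/t_{-2})(g_{m+1,n} − c_{m+1,n} t_{-1}/t_2)). -/
/-- The `w`-equation for the pair `(i,j)` at the lattice site `(m,n)` and point `t`. -/
def Weq (q : ℂ) (w : ℤ → ℤ → (ℤ → ℂ) → ℂ) (i j m n : ℤ) (t : ℤ → ℂ) : Prop :=
  w m n (Tshift q i (Tshift q j t))
    = w m (n + 1) (Tshift q i t) * w m (n + 1) (Tshift q j t) / w (m + 1) (n + 1) t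
      * (t i * w (m + 1) n (Tshift q j t) - t j * w (m + 1) n (Tshift q i t))
      / (t i * w m (n + 1) (Tshift q j t) - t j * w m (n + 1) (Tshift q i t))

/-- `f_{m,n} = T_1(w_{m,n}) / T_{-1}(w_{m,n})`. -/
noncomputable def fVar (q : ℂ) (w : ℤ → ℤ → (ℤ → ℂ) → ℂ) (m n : ℤ) (t : ℤ → ℂ) : ℂ :=
  w m n (Tshift q 1 t) / w m n (Tshift q (-1) t)

/-- `g_{m,n} = T_1 T_{-1}(w_{m,n}) / T_{-1} T_{-2}(w_{m,n})`. -/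
noncomputable def gVar (q : ℂ) (w : ℤ → ℤ → (ℤ → ℂ) → ℂ) (m n : ℤ) (t : ℤ → ℂ) : ℂ :=
  w m n (Tshift q 1 (Tshift q (-1) t)) / w m n (Tshift q (-1) (Tshift q (-2) t))

lemma Tshift_apply_ne (q : ℂ) (i : ℤ) (t : ℤ → ℂ) {l : ℤ} (h : l ≠ i) :
    Tshift q i t l = t l := Function.update_of_ne h _ _

lemma Tshift_comm (q : ℂ) {i j : ℤ} (h : i ≠ j) (t : ℤ → ℂ) :
    Tshift q i (Tshift q j t) = Tshift q j (Tshift q i t) := by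
  funext l
  simp only [Tshift, Function.update_apply]
  split_ifs <;> simp_all

lemma Tshift_ne_zero {q : ℂ} (hq : q ≠ 0) (i : ℤ) {t : ℤ → ℂ} (ht : ∀ l, t l ≠ 0) :
    ∀ l, Tshift q i t l ≠ 0 := by
  intro l
  simp only [Tshift, Function.update_apply]
  split_ifs <;> simp_all [inv_ne_zero]

lemma key (t1 t2 u1 u2 A1 A2 A3 B1 B2 F1 c0 c1 c2 : ℂ)
    (ht1 : t1 ≠ 0) (ht2 : t2 ≠ 0) (hu1 : u1 ≠ 0) (hu2 : u2 ≠ 0)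
    (hA1 : A1 ≠ 0) (hA2 : A2 ≠ 0) (hA3 : A3 ≠ 0) (hB1 : B1 ≠ 0) (hB2 : B2 ≠ 0)
    (hF1 : F1 ≠ 0) (hc0 : c0 ≠ 0) (hc1 : c1 ≠ 0) (hc2 : c2 ≠ 0)
    (d1 : u2 * A2 - t1 * A1 ≠ 0) (d2 : t2 * A2 - u1 * (c1 * A1) ≠ 0)
    (d3 : t2 * B2 - u1 * (c2 * B1) ≠ 0) :
    (c0 * (A1 * A2 / A3 * (u2 * B2 - t1 * B1) / (u2 * A2 - t1 * A1)))
      / (c1 * A1 * A2 / F1 * (t2 * B2 - u1 * (c2 * B1)) / (t2 * A2 - u1 * (c1 * A1)))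
      / (F1 / A3)
    = c0 / c1 * ((B2 / B1 - t1 / u2) * (A2 / A1 - c1 * (u1 / t2)))
      / ((A2 / A1 - t1 / u2) * (B2 / B1 - c2 * (u1 / t2))) := by
  have e1' : B2 / B1 - t1 / u2 = (u2 * B2 - t1 * B1) / (B1 * u2) := by
    rw [div_sub_div _ _ hB1 hu2]; ring_nf
  have e2' : A2 / A1 - c1 * (u1 / t2) = (t2 * A2 - u1 * (c1 * A1)) / (A1 * t2) := by
    rw [mul_div_assoc', div_sub_div _ _ hA1 ht2]; ring_nf
  have e3' : A2 / A1 - t1 / u2 = (u2 * A2 - t1 * A1) / (A1 * u2) := by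
    rw [div_sub_div _ _ hA1 hu2]; ring_nf
  have e4' : B2 / B1 - c2 * (u1 / t2) = (t2 * B2 - u1 * (c2 * B1)) / (B1 * t2) := by
    rw [mul_div_assoc', div_sub_div _ _ hB1 ht2]; ring_nf
  rw [e1', e2', e3', e4']
  set D1 := u2 * A2 - t1 * A1 with hD1
  set D2 := t2 * A2 - u1 * (c1 * A1) with hD2
  set D3 := t2 * B2 - u1 * (c2 * B1) with hD3
  set X := u2 * B2 - t1 * B1 with hX
  clear_value D1 D2 D3 X
  field_simp

/-- first half of the birational time evolution `T = T_1 T_2` of the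
similarity-reduced lattice `q`-UC hierarchy (`I = {1,2}`, `J = {-1,-2}`):
`T_1T_2(f_{m,n}) / f_{m+1,n+1} = (c_{m,n}/c_{m,n+1})
· (g_{m+1,n} − t_1/t_{-2})(g_{m,n+1} − c_{m,n+1} t_{-1}/t_2)
/ ((g_{m,n+1} − t_1/t_{-2})(g_{m+1,n} − c_{m+1,n} t_{-1}/t_2))`
wherever denominators are nonzero. -/
theorem qp6_f_evolution
    (q : ℂ) (hq : q ≠ 0)
    (w : ℤ → ℤ → (ℤ → ℂ) → ℂ)
    (hw : ∀ m n : ℤ, ∀ t : ℤ → ℂ, (∀ l, t l ≠ 0) → w m n t ≠ 0)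
    (hden : ∀ i ∈ ({1, 2, -1, -2} : Finset ℤ), ∀ j ∈ ({1, 2, -1, -2} : Finset ℤ),
      i ≠ j → ∀ m n : ℤ, ∀ t : ℤ → ℂ, (∀ l, t l ≠ 0) →
        t i * w m (n + 1) (Tshift q j t) - t j * w m (n + 1) (Tshift q i t) ≠ 0)
    (hweq : ∀ i ∈ ({1, 2, -1, -2} : Finset ℤ), ∀ j ∈ ({1, 2, -1, -2} : Finset ℤ),
      i ≠ j → ∀ m n : ℤ, ∀ t : ℤ → ℂ, (∀ l, t l ≠ 0) → Weq q w i j m n t)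
    (c : ℤ → ℤ → ℂ) (hc : ∀ m n : ℤ, c m n ≠ 0)
    (hhom : ∀ m n : ℤ, ∀ t : ℤ → ℂ, (∀ l, t l ≠ 0) →
      w m n (Tshift q 1 (Tshift q 2 t)) = c m n * w m n (Tshift q (-1) (Tshift q (-2) t)))
    (m n : ℤ) (t : ℤ → ℂ) (ht : ∀ l, t l ≠ 0)
    (h1 : fVar q w (m + 1) (n + 1) t ≠ 0)
    (h2 : gVar q w m (n + 1) t - t 1 / t (-2) ≠ 0)
    (h3 : gVar q w (m + 1) n t - c (m + 1) n * (t (-1) / t 2) ≠ 0) :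
    fVar q w m n (Tshift q 1 (Tshift q 2 t)) / fVar q w (m + 1) (n + 1) t
      = c m n / c m (n + 1)
        * ((gVar q w (m + 1) n t - t 1 / t (-2))
            * (gVar q w m (n + 1) t - c m (n + 1) * (t (-1) / t 2)))
        / ((gVar q w m (n + 1) t - t 1 / t (-2))
            * (gVar q w (m + 1) n t - c (m + 1) n * (t (-1) / t 2))) := by
  have mem1 : (1:ℤ) ∈ ({1,2,-1,-2} : Finset ℤ) := by decide
  have mem2 : (2:ℤ) ∈ ({1,2,-1,-2} : Finset ℤ) := by decide
  have memm1 : (-1:ℤ) ∈ ({1,2,-1,-2} : Finset ℤ) := by decide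
  have memm2 : (-2:ℤ) ∈ ({1,2,-1,-2} : Finset ℤ) := by decide
  have ht1 : ∀ l, Tshift q 1 t l ≠ 0 := Tshift_ne_zero hq 1 ht
  have htm1 : ∀ l, Tshift q (-1) t l ≠ 0 := Tshift_ne_zero hq (-1) ht
  have htm2 : ∀ l, Tshift q (-2) t l ≠ 0 := Tshift_ne_zero hq (-2) ht
  have ht1m1 : ∀ l, Tshift q 1 (Tshift q (-1) t) l ≠ 0 := Tshift_ne_zero hq 1 htm1
  have htm1m2 : ∀ l, Tshift q (-1) (Tshift q (-2) t) l ≠ 0 := Tshift_ne_zero hq (-1) htm2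
  -- the two w-equations
  have e1 := hweq (-2) memm2 1 mem1 (by decide) m n (Tshift q (-1) t) htm1
  have e2 := hweq 2 mem2 (-1) memm1 (by decide) m n (Tshift q 1 t) ht1
  unfold Weq at e1 e2
  rw [Tshift_comm q (show (-2:ℤ) ≠ 1 by decide) (Tshift q (-1) t),
    Tshift_comm q (show (-2:ℤ) ≠ -1 by decide) t,
    Tshift_apply_ne q (-1) t (show (-2:ℤ) ≠ -1 by decide),
    Tshift_apply_ne q (-1) t (show (1:ℤ) ≠ -1 by decide)] at e1
  rw [Tshift_apply_ne q 1 t (show (2:ℤ) ≠ 1 by decide),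
    Tshift_apply_ne q 1 t (show (-1:ℤ) ≠ 1 by decide)] at e2
  -- denominators from hden
  have d1 := hden (-2) memm2 1 mem1 (by decide) m n (Tshift q (-1) t) htm1
  rw [Tshift_comm q (show (-2:ℤ) ≠ -1 by decide) t,
    Tshift_apply_ne q (-1) t (show (-2:ℤ) ≠ -1 by decide),
    Tshift_apply_ne q (-1) t (show (1:ℤ) ≠ -1 by decide)] at d1
  have d2 := hden 2 mem2 (-1) memm1 (by decide) m n (Tshift q 1 t) ht1
  rw [Tshift_apply_ne q 1 t (show (2:ℤ) ≠ 1 by decide),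
    Tshift_apply_ne q 1 t (show (-1:ℤ) ≠ 1 by decide),
    Tshift_comm q (show (-1:ℤ) ≠ 1 by decide) t,
    Tshift_comm q (show (2:ℤ) ≠ 1 by decide) t,
    hhom m (n + 1) t ht] at d2
  -- unfold the goal and normalize all points
  simp only [fVar, gVar] at h3 ⊢
  rw [Tshift_comm q (show (1:ℤ) ≠ 2 by decide) t,
    hhom m n (Tshift q 1 t) ht1,
    Tshift_comm q (show (-2:ℤ) ≠ 1 by decide) t,
    Tshift_comm q (show (-1:ℤ) ≠ 1 by decide) (Tshift q (-2) t),
    Tshift_comm q (show (-1:ℤ) ≠ 2 by decide) (Tshift q 1 t),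
    e1, e2,
    Tshift_comm q (show (-1:ℤ) ≠ 1 by decide) t,
    Tshift_comm q (show (2:ℤ) ≠ 1 by decide) t,
    hhom m (n + 1) t ht, hhom (m + 1) n t ht]
  have hB1 : w (m+1) n (Tshift q (-1) (Tshift q (-2) t)) ≠ 0 := hw _ _ _ htm1m2
  have d3 : t 2 * w (m+1) n (Tshift q 1 (Tshift q (-1) t))
      - t (-1) * (c (m+1) n * w (m+1) n (Tshift q (-1) (Tshift q (-2) t))) ≠ 0 := by
    intro h
    apply h3
    rw [mul_div_assoc', div_sub_div _ _ hB1 (ht 2),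
      show w (m+1) n (Tshift q 1 (Tshift q (-1) t)) * t 2
          - w (m+1) n (Tshift q (-1) (Tshift q (-2) t)) * (c (m+1) n * t (-1)) = 0 by
        linear_combination h, zero_div]
  exact key (t 1) (t 2) (t (-1)) (t (-2)) _ _ _ _ _ _ _ _ _
    (ht 1) (ht 2) (ht (-1)) (ht (-2))
    (hw _ _ _ htm1m2) (hw _ _ _ ht1m1) (hw _ _ _ htm1) (hw _ _ _ htm1m2) (hw _ _ _ ht1m1)
    (hw _ _ _ ht1) (hc m n) (hc m (n+1)) (hc (m+1) n) d1 d2 d3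
end
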